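/- arXiv:2210.01017 — 2 statements merged into one kernel-verified Lean document; each statement's English description precedes it below -/
import Mathlib

section
/- Let (X, d, μ) be an RD-space, p ∈ (1,∞), ω ∈ A_p(μ), and let φ : (0,∞) → (0,∞) be increasing and continuous satisfying (1.10): φ(r)/r ≤ C₁·φ(s)/s for all 0 < s ≤ r, and (1.11): ∫_t^∞ φ(s)/s² ds ≤ C₂·φ(t)/t for all t > 0. Then there exists a constant C > 0 such that for every ball B ⊆ X, ∑_{k=1}^∞ k·(φ(ω(2^k B))/ω(2^k B))^{1/p} ≤ C·(φ(ω(B))/ω(B))^{1/p}, where 2^k B denotes the ball concentric with B of 2^k times the radius. -/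
open MeasureTheory Metric ENNReal

private lemma psi_decay (φ : ℝ → ℝ) (hφpos : ∀ t : ℝ, 0 < t → 0 < φ t)
    (hφmono : MonotoneOn φ (Set.Ioi 0)) (C₂ : ℝ)
    (h111 : ∀ t : ℝ, 0 < t →
      ∫⁻ s in Set.Ioi t, ENNReal.ofReal (φ s / s ^ 2) ≤ ENNReal.ofReal (C₂ * (φ t / t))) :
    ∃ θ : ℝ, 1/2 ≤ θ ∧ θ < 1 ∧ 0 < C₂ ∧
      ∀ (m : ℕ) (t : ℝ), 0 < t →
        φ (2 ^ m * t) / (2 ^ m * t) ≤ 4 * C₂ * θ ^ m * (φ t / t) := by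
  have hJlow : ∀ t : ℝ, 0 < t → ENNReal.ofReal (φ t / t / 4)
      ≤ ∫⁻ s in Set.Ioc t (2*t), ENNReal.ofReal (φ s / s ^ 2) := by
    intro t ht
    have ht' : t ≠ 0 := ht.ne'
    have hmono' : ∀ s ∈ Set.Ioc t (2*t),
        ENNReal.ofReal (φ t / (4 * t^2)) ≤ ENNReal.ofReal (φ s / s ^ 2) := by
      intro s hs
      apply ENNReal.ofReal_le_ofReal
      have hs1 : t < s := hs.1
      have hs2 : s ≤ 2*t := hs.2
      have hspos : 0 < s := ht.trans hs1
      have hφle : φ t ≤ φ s := hφmono (Set.mem_Ioi.2 ht) (Set.mem_Ioi.2 hspos) hs1.le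
      have h1 : s^2 ≤ 4*t^2 := by nlinarith
      have h2 : (0:ℝ) < s^2 := by positivity
      exact div_le_div₀ (hφpos s hspos).le hφle h2 h1
    calc ENNReal.ofReal (φ t / t / 4)
        = ENNReal.ofReal (φ t / (4*t^2)) * volume (Set.Ioc t (2*t)) := by
          rw [Real.volume_Ioc, ← ENNReal.ofReal_mul (by have := hφpos t ht; positivity)]
          congr 1
          field_simp
          ring
      _ = ∫⁻ _ in Set.Ioc t (2*t), ENNReal.ofReal (φ t / (4*t^2)) :=
          (setLIntegral_const _ _).symm
      _ ≤ ∫⁻ s in Set.Ioc t (2*t), ENNReal.ofReal (φ s / s ^ 2) :=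
          setLIntegral_mono' measurableSet_Ioc hmono'
  have hsplit : ∀ t : ℝ, 0 < t →
      (∫⁻ s in Set.Ioi t, ENNReal.ofReal (φ s / s ^ 2))
        = (∫⁻ s in Set.Ioc t (2*t), ENNReal.ofReal (φ s / s ^ 2))
          + ∫⁻ s in Set.Ioi (2*t), ENNReal.ofReal (φ s / s ^ 2) := by
    intro t ht
    rw [← lintegral_union measurableSet_Ioi (Set.Ioc_disjoint_Ioi le_rfl),
      Set.Ioc_union_Ioi_eq_Ioi (by linarith)]
  have hIfin : ∀ t : ℝ, 0 < t → (∫⁻ s in Set.Ioi t, ENNReal.ofReal (φ s / s ^ 2)) ≠ ⊤ :=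
    fun t ht => ((h111 t ht).trans_lt ENNReal.ofReal_lt_top).ne
  set i : ℝ → ℝ := fun t => (∫⁻ s in Set.Ioi t, ENNReal.ofReal (φ s / s ^ 2)).toReal with hi
  have hlow : ∀ t : ℝ, 0 < t → φ t / t / 4 ≤ i t := by
    intro t ht
    have h1 : ENNReal.ofReal (φ t / t / 4) ≤ ∫⁻ s in Set.Ioi t, ENNReal.ofReal (φ s / s ^ 2) :=
      (hJlow t ht).trans (lintegral_mono_set Set.Ioc_subset_Ioi_self)
    have h2 := ENNReal.toReal_mono (hIfin t ht) h1
    rwa [ENNReal.toReal_ofReal (by have := hφpos t ht; positivity)] at h2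
  have hipos : ∀ t : ℝ, 0 < t → 0 < i t := by
    intro t ht
    have h0 : 0 < φ t / t / 4 := by have := hφpos t ht; positivity
    linarith [hlow t ht]
  have hup : ∀ t : ℝ, 0 < t → i t ≤ C₂ * (φ t / t) := by
    intro t ht
    have h1 := ENNReal.toReal_mono ENNReal.ofReal_ne_top (h111 t ht)
    by_cases hc : 0 ≤ C₂ * (φ t / t)
    · rwa [ENNReal.toReal_ofReal hc] at h1
    · exfalso
      rw [ENNReal.ofReal_eq_zero.mpr (le_of_not_ge hc), ENNReal.toReal_zero] at h1
      linarith [hipos t ht]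
  have hC₂4 : 1/4 ≤ C₂ := by
    have h1 := (hlow 1 one_pos).trans (hup 1 one_pos)
    have h2 := hφpos 1 one_pos
    rw [div_one] at h1
    nlinarith
  have hC₂ : 0 < C₂ := by linarith
  set θ := 1 - 1/(8*C₂) with hθdef
  have hθhalf : 1/2 ≤ θ := by
    rw [hθdef]
    have : 1/(8*C₂) ≤ 1/2 := by
      rw [div_le_div_iff₀ (by linarith) (by norm_num)]
      linarith
    linarith
  have hθ1 : θ < 1 := by
    rw [hθdef]
    have : 0 < 1/(8*C₂) := by positivity
    linarith
  have hθ0 : 0 < θ := lt_of_lt_of_le one_half_pos hθhalf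
  have hstep : ∀ t : ℝ, 0 < t → i (2*t) ≤ θ * i t := by
    intro t ht
    have h2t : 0 < 2*t := by linarith
    have hs := hsplit t ht
    have hJfin : (∫⁻ s in Set.Ioc t (2*t), ENNReal.ofReal (φ s / s ^ 2)) ≠ ⊤ :=
      ne_top_of_le_ne_top (hIfin t ht) (hs ▸ le_self_add)
    have hreal : i t = (∫⁻ s in Set.Ioc t (2*t), ENNReal.ofReal (φ s / s ^ 2)).toReal + i (2*t) := by
      simp only [hi]
      rw [hs, ENNReal.toReal_add hJfin (hIfin _ h2t)]
    have hJ1 : φ t / t / 4 ≤ (∫⁻ s in Set.Ioc t (2*t), ENNReal.ofReal (φ s / s ^ 2)).toReal := by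
      have h2 := ENNReal.toReal_mono hJfin (hJlow t ht)
      rwa [ENNReal.toReal_ofReal (by have := hφpos t ht; positivity)] at h2
    have h8 : (0:ℝ) < 8*C₂ := by linarith
    have key : (8*C₂) * i (2*t) ≤ (8*C₂) * (θ * i t) := by
      have hval : (8*C₂) * (θ * i t) = (8*C₂ - 1) * i t := by
        rw [hθdef]; field_simp
      rw [hval]
      nlinarith [mul_le_mul_of_nonneg_left hJ1 hC₂.le, hup t ht, hipos t ht, hreal]
    exact le_of_mul_le_mul_left key h8
  have hiter : ∀ (m : ℕ) (t : ℝ), 0 < t → i (2^m * t) ≤ θ^m * i t := by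
    intro m
    induction m with
    | zero => intro t ht; simp
    | succ n ih =>
      intro t ht
      have h1 : (2:ℝ)^(n+1)*t = 2*(2^n*t) := by ring
      rw [h1, pow_succ]
      calc i (2*(2^n*t)) ≤ θ * i (2^n*t) := hstep _ (by positivity)
        _ ≤ θ * (θ^n * i t) := mul_le_mul_of_nonneg_left (ih t ht) hθ0.le
        _ = θ^n * θ * i t := by ring
  refine ⟨θ, hθhalf, hθ1, hC₂, ?_⟩
  intro m t ht
  have h2m : (0:ℝ) < 2^m*t := by positivity
  have hθm : (0:ℝ) ≤ θ^m := by positivity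
  calc φ (2^m*t)/(2^m*t) ≤ 4 * i (2^m*t) := by linarith [hlow _ h2m]
    _ ≤ 4*(θ^m * i t) := by linarith [hiter m t ht]
    _ ≤ 4*(θ^m * (C₂*(φ t/t))) := by
        have h5 := mul_le_mul_of_nonneg_left (hup t ht) hθm
        linarith
    _ = 4*C₂*θ^m*(φ t/t) := by ring

private lemma seq_sum (p : ℝ) (hp : 1 < p)
    (φ : ℝ → ℝ) (hφpos : ∀ t : ℝ, 0 < t → 0 < φ t)
    (hφmono : MonotoneOn φ (Set.Ioi 0))
    (C₁ C₂ C₃ : ℝ) (hC₃ : 1 < C₃)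
    (h110 : ∀ s r : ℝ, 0 < s → s ≤ r → φ r / r ≤ C₁ * (φ s / s))
    (h111 : ∀ t : ℝ, 0 < t →
      ∫⁻ s in Set.Ioi t, ENNReal.ofReal (φ s / s ^ 2) ≤ ENNReal.ofReal (C₂ * (φ t / t))) :
    ∃ C : ℝ, 0 < C ∧ ∀ W : ℕ → ℝ, (∀ k, 0 < W k) → (∀ k, C₃ * W k ≤ W (k + 1)) →
      ∑' k : ℕ, ENNReal.ofReal (((k : ℝ) + 1) * (φ (W (k + 1)) / W (k + 1)) ^ (1 / p))
        ≤ ENNReal.ofReal (C * (φ (W 0) / W 0) ^ (1 / p)) := by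
  obtain ⟨θ, hθh, hθ1, hC₂, hdecay⟩ := psi_decay φ hφpos hφmono C₂ h111
  have hθ0 : (0:ℝ) < θ := lt_of_lt_of_le one_half_pos hθh
  have hC₁ : 1 ≤ C₁ := by
    have h1 := h110 1 1 one_pos le_rfl
    have h2 := hφpos 1 one_pos
    rw [div_one] at h1
    nlinarith
  have hC₁0 : (0:ℝ) ≤ C₁ := by linarith
  set α := Real.logb 2 C₃ with hα
  have hα0 : 0 < α := Real.logb_pos one_lt_two hC₃
  set ρ := θ ^ α with hρdef
  have hρ0 : 0 < ρ := Real.rpow_pos_of_pos hθ0 _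
  have hρ1 : ρ < 1 := Real.rpow_lt_one hθ0.le hθ1 hα0
  have hp0 : 0 < 1/p := by positivity
  set q := ρ ^ (1/p) with hqdef
  have hq0 : 0 < q := Real.rpow_pos_of_pos hρ0 _
  have hq1 : q < 1 := Real.rpow_lt_one hρ0.le hρ1 hp0
  set K := 4 * C₂ * C₁^2 * θ⁻¹ with hK
  have hK0 : 0 < K := by positivity
  have hSsum : Summable (fun k : ℕ => ((k:ℝ)+1) * q ^ (k+1)) := by
    have h1 : Summable (fun k : ℕ => ((k:ℝ)^1 * q ^ k)) :=
      summable_pow_mul_geometric_of_norm_lt_one 1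
        (by rw [Real.norm_eq_abs, abs_of_pos hq0]; exact hq1)
    have h2 : Summable (fun k : ℕ => q ^ k) := summable_geometric_of_lt_one hq0.le hq1
    have h3 := (h1.add h2).mul_right q
    refine h3.congr fun k => ?_
    ring
  set S := ∑' k : ℕ, ((k:ℝ)+1) * q ^ (k+1) with hS
  have hS0 : 0 ≤ S := tsum_nonneg fun k => by positivity
  have hKp : (0:ℝ) ≤ K ^ (1/p) := Real.rpow_nonneg hK0.le _
  refine ⟨K ^ (1/p) * S + 1, by nlinarith [mul_nonneg hKp hS0], ?_⟩
  intro W hWpos hWrec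
  have hW0 := hWpos 0
  have hC₃0 : (0:ℝ) < C₃ := by linarith
  have hWgeo : ∀ k : ℕ, C₃ ^ k * W 0 ≤ W k := by
    intro k
    induction k with
    | zero => simp
    | succ n ih =>
      calc C₃ ^ (n+1) * W 0 = C₃ * (C₃ ^ n * W 0) := by ring
        _ ≤ C₃ * W n := mul_le_mul_of_nonneg_left ih hC₃0.le
        _ ≤ W (n+1) := hWrec n
  set ψ0 := φ (W 0) / W 0 with hψ0
  have hψ0pos : 0 < ψ0 := div_pos (hφpos _ hW0) hW0
  have hmain : ∀ n : ℕ, φ (W n) / W n ≤ K * ρ ^ n * ψ0 := by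
    intro n
    set m := ⌊(n:ℝ) * α⌋₊ with hm
    have hmle : (2:ℝ)^m ≤ C₃ ^ n := by
      have h2 : (2:ℝ) ^ ((n:ℝ) * α) = C₃ ^ n := by
        rw [mul_comm, hα, Real.rpow_mul (by norm_num : (0:ℝ) ≤ 2),
          Real.rpow_logb two_pos (by norm_num) hC₃0, Real.rpow_natCast]
      rw [← Real.rpow_natCast 2 m, ← h2]
      exact Real.rpow_le_rpow_of_exponent_le one_le_two (Nat.floor_le (by positivity))
    have hstep1 : φ (W n) / W n ≤ C₁ * (φ (C₃ ^ n * W 0) / (C₃ ^ n * W 0)) :=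
      h110 _ _ (mul_pos (pow_pos hC₃0 n) hW0) (hWgeo n)
    have hstep2 : φ (C₃ ^ n * W 0) / (C₃ ^ n * W 0)
        ≤ C₁ * (φ ((2:ℝ) ^ m * W 0) / ((2:ℝ) ^ m * W 0)) :=
      h110 _ _ (mul_pos (pow_pos two_pos m) hW0) (mul_le_mul_of_nonneg_right hmle hW0.le)
    have hstep3 : φ ((2:ℝ)^m * W 0) / ((2:ℝ)^m * W 0) ≤ 4 * C₂ * θ ^ m * ψ0 :=
      hdecay m (W 0) hW0
    have hstep4 : θ ^ m ≤ θ⁻¹ * ρ ^ n := by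
      have h1 : (n:ℝ) * α - 1 ≤ (m:ℝ) := by
        have h0 := Nat.lt_floor_add_one ((n:ℝ) * α)
        rw [hm]
        linarith
      have h2 : θ ^ ((m:ℝ)) ≤ θ ^ ((n:ℝ)*α - 1) :=
        Real.rpow_le_rpow_of_exponent_ge hθ0 hθ1.le h1
      rw [Real.rpow_sub hθ0, Real.rpow_one] at h2
      have h3 : θ ^ ((n:ℝ)*α) = ρ ^ n := by
        rw [hρdef, mul_comm, Real.rpow_mul hθ0.le, Real.rpow_natCast]
      rw [h3, div_eq_mul_inv, mul_comm] at h2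
      rw [← Real.rpow_natCast θ m]
      exact h2
    calc φ (W n) / W n ≤ C₁ * (φ (C₃ ^ n * W 0) / (C₃ ^ n * W 0)) := hstep1
      _ ≤ C₁ * (C₁ * (φ ((2:ℝ)^m * W 0) / ((2:ℝ)^m * W 0))) :=
          mul_le_mul_of_nonneg_left hstep2 hC₁0
      _ ≤ C₁ * (C₁ * (4 * C₂ * θ^m * ψ0)) :=
          mul_le_mul_of_nonneg_left (mul_le_mul_of_nonneg_left hstep3 hC₁0) hC₁0
      _ ≤ C₁ * (C₁ * (4 * C₂ * (θ⁻¹ * ρ^n) * ψ0)) := by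
          have h4 : 4*C₂*θ^m*ψ0 ≤ 4*C₂*(θ⁻¹*ρ^n)*ψ0 := by
            apply mul_le_mul_of_nonneg_right _ hψ0pos.le
            exact mul_le_mul_of_nonneg_left hstep4 (by linarith)
          exact mul_le_mul_of_nonneg_left (mul_le_mul_of_nonneg_left h4 hC₁0) hC₁0
      _ = K * ρ^n * ψ0 := by rw [hK]; ring
  have hterm : ∀ k : ℕ, ((k:ℝ)+1) * (φ (W (k+1)) / W (k+1)) ^ (1/p)
      ≤ (((k:ℝ)+1) * q ^ (k+1)) * (K ^ (1/p) * ψ0 ^ (1/p)) := by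
    intro k
    have hbase : 0 ≤ φ (W (k+1)) / W (k+1) :=
      div_nonneg (hφpos _ (hWpos _)).le (hWpos _).le
    have h1 : (φ (W (k+1)) / W (k+1)) ^ (1/p) ≤ (K * ρ^(k+1) * ψ0) ^ (1/p) :=
      Real.rpow_le_rpow hbase (hmain (k+1)) hp0.le
    have h2 : (K * ρ^(k+1) * ψ0)^(1/p) = K^(1/p) * q^(k+1) * ψ0^(1/p) := by
      rw [Real.mul_rpow (by positivity) hψ0pos.le, Real.mul_rpow hK0.le (by positivity)]
      congr 1
      rw [hqdef, ← Real.rpow_natCast ρ (k+1), ← Real.rpow_mul hρ0.le,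
        ← Real.rpow_natCast (ρ ^ (1/p)) (k+1), ← Real.rpow_mul hρ0.le,
        mul_comm (1/p) ((k+1 : ℕ) : ℝ), mul_comm]
    calc ((k:ℝ)+1) * (φ (W (k+1)) / W (k+1)) ^ (1/p)
        ≤ ((k:ℝ)+1) * (K^(1/p) * q^(k+1) * ψ0^(1/p)) := by
          rw [← h2]; exact mul_le_mul_of_nonneg_left h1 (by positivity)
      _ = (((k:ℝ)+1) * q^(k+1)) * (K^(1/p) * ψ0^(1/p)) := by ring
  have hψp : 0 ≤ ψ0^(1/p) := Real.rpow_nonneg hψ0pos.le _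
  calc ∑' k : ℕ, ENNReal.ofReal (((k:ℝ)+1) * (φ (W (k+1)) / W (k+1)) ^ (1/p))
      ≤ ∑' k : ℕ, ENNReal.ofReal ((((k:ℝ)+1) * q^(k+1)) * (K^(1/p) * ψ0^(1/p))) :=
        ENNReal.tsum_le_tsum fun k => ENNReal.ofReal_le_ofReal (hterm k)
    _ = ENNReal.ofReal (∑' k : ℕ, (((k:ℝ)+1) * q^(k+1)) * (K^(1/p) * ψ0^(1/p))) :=
        (ENNReal.ofReal_tsum_of_nonneg
          (fun k => mul_nonneg (mul_nonneg (by positivity) (pow_nonneg hq0.le _))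
            (mul_nonneg hKp hψp))
          (hSsum.mul_right _)).symm
    _ ≤ ENNReal.ofReal ((K^(1/p) * S + 1) * ψ0^(1/p)) := by
        apply ENNReal.ofReal_le_ofReal
        rw [tsum_mul_right, ← hS]
        nlinarith [mul_nonneg hS0 (mul_nonneg hKp hψp)]

/-- Lemma 2.3: under conditions (1.10) and (1.11) on `φ` and `ω ∈ A_p(μ)` on an RD-space
(so that `C₃ ω(B) ≤ ω(2B) ≤ C₄ ω(B)` with `C₃, C₄ > 1`), one has
`∑_{k≥1} k (φ(ω(2^k B))/ω(2^k B))^{1/p} ≤ C (φ(ω(B))/ω(B))^{1/p}`. -/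
theorem stmt6 {X : Type*} [MetricSpace X] [MeasurableSpace X] [BorelSpace X]
    (μ : Measure X) (Cμ : ℝ≥0∞) (hCμ : Cμ ≠ ⊤)
    (hdoub : ∀ (x : X) (r : ℝ), μ (ball x (2 * r)) ≤ Cμ * μ (ball x r))
    (p p' : ℝ) (hp : 1 < p) (hpp' : 1 / p + 1 / p' = 1)
    (ω : X → ℝ≥0∞) (hωm : Measurable ω)
    (A : ℝ≥0∞) (hA : A ≠ ⊤)
    (hAp : ∀ (x : X) (r : ℝ), 0 < r →
      ((μ (ball x r))⁻¹ * ∫⁻ y in ball x r, ω y ∂μ) *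
        ((μ (ball x r))⁻¹ * ∫⁻ y in ball x r, ω y ^ (1 - p') ∂μ) ^ (p - 1) ≤ A)
    (hw : ∀ (x : X) (r : ℝ), 0 < r →
      0 < ∫⁻ y in ball x r, ω y ∂μ ∧ ∫⁻ y in ball x r, ω y ∂μ < ⊤)
    (C₃ C₄ : ℝ) (hC₃ : 1 < C₃) (hC₄ : 1 < C₄)
    (hrd : ∀ (x : X) (r : ℝ), 0 < r →
      ENNReal.ofReal C₃ * ∫⁻ y in ball x r, ω y ∂μ ≤ ∫⁻ y in ball x (2 * r), ω y ∂μ ∧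
      ∫⁻ y in ball x (2 * r), ω y ∂μ ≤ ENNReal.ofReal C₄ * ∫⁻ y in ball x r, ω y ∂μ)
    (φ : ℝ → ℝ) (hφpos : ∀ t : ℝ, 0 < t → 0 < φ t)
    (hφmono : MonotoneOn φ (Set.Ioi 0)) (hφcont : ContinuousOn φ (Set.Ioi 0))
    (C₁ C₂ : ℝ)
    (h110 : ∀ s r : ℝ, 0 < s → s ≤ r → φ r / r ≤ C₁ * (φ s / s))
    (h111 : ∀ t : ℝ, 0 < t →
      ∫⁻ s in Set.Ioi t, ENNReal.ofReal (φ s / s ^ 2) ≤ ENNReal.ofReal (C₂ * (φ t / t))) :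
    ∃ C : ℝ, 0 < C ∧ ∀ (x : X) (r : ℝ), 0 < r →
      ∑' k : ℕ, ENNReal.ofReal (((k : ℝ) + 1) *
          (φ ((∫⁻ y in ball x (2 ^ (k + 1) * r), ω y ∂μ).toReal) /
            (∫⁻ y in ball x (2 ^ (k + 1) * r), ω y ∂μ).toReal) ^ (1 / p))
        ≤ ENNReal.ofReal (C *
            (φ ((∫⁻ y in ball x r, ω y ∂μ).toReal) /
              (∫⁻ y in ball x r, ω y ∂μ).toReal) ^ (1 / p)) := by
  obtain ⟨C, hC0, hC⟩ := seq_sum p hp φ hφpos hφmono C₁ C₂ C₃ hC₃ h110 h111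
  refine ⟨C, hC0, ?_⟩
  intro x r hr
  have hb : ∀ k : ℕ, 0 < (2:ℝ)^k * r := fun k => by positivity
  have hWpos : ∀ k : ℕ, 0 < ((∫⁻ y in ball x ((2:ℝ)^k * r), ω y ∂μ)).toReal := by
    intro k
    obtain ⟨h1, h2⟩ := hw x _ (hb k)
    exact ENNReal.toReal_pos h1.ne' h2.ne
  have hWrec : ∀ k : ℕ, C₃ * ((∫⁻ y in ball x ((2:ℝ)^k * r), ω y ∂μ)).toReal
      ≤ ((∫⁻ y in ball x ((2:ℝ)^(k+1) * r), ω y ∂μ)).toReal := by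
    intro k
    obtain ⟨h1, -⟩ := hrd x ((2:ℝ)^k * r) (hb k)
    rw [show 2 * ((2:ℝ)^k * r) = (2:ℝ)^(k+1) * r by ring] at h1
    have hfin : (∫⁻ y in ball x ((2:ℝ)^(k+1) * r), ω y ∂μ) ≠ ⊤ := (hw x _ (hb (k+1))).2.ne
    have h2 := ENNReal.toReal_mono hfin h1
    rwa [ENNReal.toReal_mul, ENNReal.toReal_ofReal (by linarith)] at h2
  have key := hC (fun k => ((∫⁻ y in ball x ((2:ℝ)^k * r), ω y ∂μ)).toReal) hWpos hWrec
  rw [show ball x r = ball x ((2:ℝ)^(0:ℕ) * r) by rw [pow_zero, one_mul]]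
  exact key
end

section
/- Tail series estimate used in the proof of Theorem 1.8: let (X,d,μ) be an RD-space, p₁ ∈ (1,∞), ω ∈ A_{p₁}(μ), and f ∈ M^{p₁,φ}(ω) where φ is increasing, continuous and satisfies conditions (1.10) and (1.11). Then there is a constant C such that for every ball B, ∑_{k=1}^∞ μ(2^k B)⁻¹ ∫_{2^{k+1}B} |f(y)| dμ(y) ≤ C·‖f‖_{M^{p₁,φ}(ω)}·(φ(ω(B))/ω(B))^{1/p₁}. -/
open MeasureTheory Metric ENNReal

section AuxLemmas
open Set

lemma decay_aux (φ : ℝ → ℝ) (hφpos : ∀ t : ℝ, 0 < t → 0 < φ t)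
    (hφmono : MonotoneOn φ (Set.Ioi 0)) (C₂ c : ℝ) (hc1 : 1 < c) (hc2 : c ≤ 2)
    (h111 : ∀ t : ℝ, 0 < t →
      ∫⁻ s in Set.Ioi t, ENNReal.ofReal (φ s / s ^ 2) ≤ ENNReal.ofReal (C₂ * (φ t / t))) :
    ∃ θ E : ℝ, 0 ≤ θ ∧ θ < 1 ∧ 0 < E ∧ ∀ (t u : ℝ) (k : ℕ), 0 < t → c ^ k * t ≤ u →
      φ u / u ≤ E * θ ^ k * (φ t / t) := by
  set L : ℝ → ℝ≥0∞ := fun t => ∫⁻ s in Set.Ioi t, ENNReal.ofReal (φ s / s ^ 2) with hL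
  set c' : ℝ := (c - 1) / 4 with hc'
  have hc'pos : 0 < c' := by rw [hc']; linarith
  have hgpos : ∀ t : ℝ, 0 < t → 0 < φ t / t := fun t ht => div_pos (hφpos t ht) ht
  -- key1 : splitting lower bound
  have key1 : ∀ t : ℝ, 0 < t → ENNReal.ofReal (c' * (φ t / t)) + L (c * t) ≤ L t := by
    intro t ht
    have hct : t ≤ c * t := by nlinarith
    have hsplit : Set.Ioi t = Set.Ioc t (c * t) ∪ Set.Ioi (c * t) :=
      (Set.Ioc_union_Ioi_eq_Ioi hct).symm
    have hdisj : Disjoint (Set.Ioc t (c * t)) (Set.Ioi (c * t)) := Set.Ioc_disjoint_Ioi le_rfl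
    have hsum : L t = (∫⁻ s in Set.Ioc t (c * t), ENNReal.ofReal (φ s / s ^ 2)) + L (c * t) := by
      rw [hL]
      simp only
      rw [hsplit, lintegral_union measurableSet_Ioi hdisj]
    rw [hsum]
    refine add_le_add ?_ le_rfl
    have hconst : ∫⁻ _ in Set.Ioc t (c * t), ENNReal.ofReal (φ t / (4 * t ^ 2)) =
        ENNReal.ofReal (φ t / (4 * t ^ 2)) * ENNReal.ofReal (c * t - t) := by
      rw [setLIntegral_const, Real.volume_Ioc]
    have hmono : (∫⁻ _ in Set.Ioc t (c * t), ENNReal.ofReal (φ t / (4 * t ^ 2))) ≤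
        ∫⁻ s in Set.Ioc t (c * t), ENNReal.ofReal (φ s / s ^ 2) := by
      refine setLIntegral_mono' measurableSet_Ioc fun s hs => ?_
      refine ENNReal.ofReal_le_ofReal ?_
      have hs1 : t < s := hs.1
      have hs2 : s ≤ c * t := hs.2
      have hspos : 0 < s := ht.trans hs1
      have hφle : φ t ≤ φ s := hφmono ht (by exact hspos) hs1.le
      have h2t : s ≤ 2 * t := by nlinarith
      have hsq : s ^ 2 ≤ 4 * t ^ 2 := by nlinarith
      exact div_le_div₀ (le_trans (hφpos t ht).le hφle) hφle (by positivity) hsq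
    refine le_trans ?_ hmono
    rw [hconst, ← ENNReal.ofReal_mul (div_nonneg (hφpos t ht).le (by positivity))]
    refine ENNReal.ofReal_le_ofReal (le_of_eq ?_)
    field_simp
    ring
  -- finiteness
  have key2 : ∀ t : ℝ, 0 < t → L t ≠ ⊤ := by
    intro t ht
    exact ne_top_of_le_ne_top ENNReal.ofReal_ne_top (h111 t ht)
  -- C₂ positivity and c' ≤ C₂
  have hofle : ∀ t : ℝ, 0 < t →
      ENNReal.ofReal (c' * (φ t / t)) ≤ ENNReal.ofReal (C₂ * (φ t / t)) := by
    intro t ht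
    exact le_trans (le_add_right le_rfl) ((key1 t ht).trans (h111 t ht))
  have hC₂pos : 0 < C₂ := by
    have h1 := hofle 1 one_pos
    have hg1 : 0 < φ 1 / 1 := hgpos 1 one_pos
    have h2 : (0 : ℝ≥0∞) < ENNReal.ofReal (c' * (φ 1 / 1)) :=
      ENNReal.ofReal_pos.mpr (by positivity)
    have h3 : 0 < C₂ * (φ 1 / 1) := ENNReal.ofReal_pos.mp (lt_of_lt_of_le h2 h1)
    nlinarith
  have hc'C₂ : c' ≤ C₂ := by
    have h1 := hofle 1 one_pos
    have hg1 : 0 < φ 1 / 1 := hgpos 1 one_pos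
    rw [ENNReal.ofReal_le_ofReal_iff (by positivity)] at h1
    nlinarith
  set F : ℝ → ℝ := fun t => (L t).toReal with hF
  have hFnonneg : ∀ t, 0 ≤ F t := fun t => ENNReal.toReal_nonneg
  have hFC₂ : ∀ t : ℝ, 0 < t → F t ≤ C₂ * (φ t / t) := by
    intro t ht
    have h := ENNReal.toReal_mono ENNReal.ofReal_ne_top (h111 t ht)
    rwa [ENNReal.toReal_ofReal (by nlinarith [hgpos t ht])] at h
  have hgF : ∀ t : ℝ, 0 < t → c' * (φ t / t) + F (c * t) ≤ F t := by
    intro t ht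
    have h := ENNReal.toReal_mono (key2 t ht) (key1 t ht)
    rwa [ENNReal.toReal_add ENNReal.ofReal_ne_top (key2 (c * t) (by positivity)),
      ENNReal.toReal_ofReal (by nlinarith [hgpos t ht])] at h
  set θ : ℝ := 1 - c' / C₂ with hθ
  have hθ0 : 0 ≤ θ := by
    rw [hθ]
    have : c' / C₂ ≤ 1 := (div_le_one hC₂pos).mpr hc'C₂
    linarith
  have hθ1 : θ < 1 := by
    rw [hθ]
    have : 0 < c' / C₂ := div_pos hc'pos hC₂pos
    linarith
  have hstep : ∀ t : ℝ, 0 < t → F (c * t) ≤ θ * F t := by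
    intro t ht
    have h1 := hgF t ht
    have h2 := hFC₂ t ht
    have hgt : F t / C₂ ≤ φ t / t := by
      rw [div_le_iff₀ hC₂pos]
      linarith [h2]
    have h3 : c' * (F t / C₂) ≤ c' * (φ t / t) :=
      mul_le_mul_of_nonneg_left hgt hc'pos.le
    rw [hθ]
    have hexp : (1 - c' / C₂) * F t = F t - c' * (F t / C₂) := by ring
    rw [hexp]
    linarith
  have hiter : ∀ (t : ℝ) (k : ℕ), 0 < t → F (c ^ k * t) ≤ θ ^ k * F t := by
    intro t k ht
    induction k with
    | zero => simp
    | succ n ih =>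
      have hpos : 0 < c ^ n * t := by positivity
      have h1 : c ^ (n + 1) * t = c * (c ^ n * t) := by ring
      rw [h1]
      calc F (c * (c ^ n * t)) ≤ θ * F (c ^ n * t) := hstep _ hpos
        _ ≤ θ * (θ ^ n * F t) := mul_le_mul_of_nonneg_left ih hθ0
        _ = θ ^ (n + 1) * F t := by ring
  have hant : ∀ a b : ℝ, 0 < a → a ≤ b → F b ≤ F a := by
    intro a b ha hab
    exact ENNReal.toReal_mono (key2 a ha) (lintegral_mono_set (Set.Ioi_subset_Ioi hab))
  have hgle : ∀ t : ℝ, 0 < t → φ t / t ≤ F t / c' := by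
    intro t ht
    have h1 := hgF t ht
    have h2 := hFnonneg (c * t)
    rw [le_div_iff₀ hc'pos]
    nlinarith
  refine ⟨θ, C₂ / c', hθ0, hθ1, div_pos hC₂pos hc'pos, ?_⟩
  intro t u k ht hu
  have hckt : 0 < c ^ k * t := by positivity
  have hupos : 0 < u := lt_of_lt_of_le hckt hu
  have s1 : F u ≤ F (c ^ k * t) := hant _ _ hckt hu
  have s2 : F (c ^ k * t) ≤ θ ^ k * F t := hiter t k ht
  have s3 : F t ≤ C₂ * (φ t / t) := hFC₂ t ht
  have hθk : (0 : ℝ) ≤ θ ^ k := pow_nonneg hθ0 k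
  calc φ u / u ≤ F u / c' := hgle u hupos
    _ ≤ θ ^ k * (C₂ * (φ t / t)) / c' := by
        refine (div_le_div_iff_of_pos_right hc'pos).mpr ?_
        refine s1.trans (s2.trans ?_)
        nlinarith
    _ = C₂ / c' * θ ^ k * (φ t / t) := by ring


lemma perball_aux {X : Type*} [MeasurableSpace X] (ν : Measure X)
    (p₁ p₁' : ℝ) (hp₁ : 1 < p₁) (hpp' : 1 / p₁ + 1 / p₁' = 1)
    (ω : X → ℝ≥0∞) (hωm : Measurable ω) (f : X → ℝ) (hf : Measurable f)
    (A m : ℝ≥0∞) (hA : A ≠ ⊤) (hm0 : m ≠ 0) (hmT : m ≠ ⊤)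
    (hW0 : 0 < ∫⁻ y, ω y ∂ν) (hWT : ∫⁻ y, ω y ∂ν < ⊤)
    (hAp : (m⁻¹ * ∫⁻ y, ω y ∂ν) * (m⁻¹ * ∫⁻ y, ω y ^ (1 - p₁') ∂ν) ^ (p₁ - 1) ≤ A)
    (M b : ℝ) (hM : 0 ≤ M) (hb : 0 < b)
    (hfb : ∫⁻ y, ENNReal.ofReal (|f y| ^ p₁) * ω y ∂ν ≤ ENNReal.ofReal (M ^ p₁ * b)) :
    ∫⁻ y, ENNReal.ofReal |f y| ∂ν ≤
      A ^ (1 / p₁) * m * ENNReal.ofReal (M * (b / (∫⁻ y, ω y ∂ν).toReal) ^ (1 / p₁)) := by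
  -- exponent facts
  have hp₁pos : 0 < p₁ := lt_trans one_pos hp₁
  have hp₁ne : p₁ ≠ 0 := hp₁pos.ne'
  have hip' : 1 / p₁' = 1 - 1 / p₁ := by linarith
  have hip'pos : 0 < 1 / p₁' := by
    rw [hip']
    have : 1 / p₁ < 1 := by
      rw [div_lt_one hp₁pos]; exact hp₁
    linarith
  have hp₁'pos : 0 < p₁' := by
    by_contra h
    push_neg at h
    have : 1 / p₁' ≤ 0 := div_nonpos_of_nonneg_of_nonpos zero_le_one h
    linarith
  have hp₁'ne : p₁' ≠ 0 := hp₁'pos.ne'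
  have e1 : (-(1 / p₁)) * p₁' = 1 - p₁' := by
    field_simp at hpp' ⊢
    nlinarith [hpp']
  have e2 : (p₁ - 1) * (1 / p₁) = 1 / p₁' := by
    rw [hip']
    field_simp
  have e3 : 1 / p₁' + 1 / p₁ = 1 := by linarith
  have h1p₁' : 1 - p₁' < 0 := by
    have : 1 < p₁' := by
      by_contra h
      push_neg at h
      have : 1 ≤ 1 / p₁' := by
        rw [le_div_iff₀ hp₁'pos]; linarith
      rw [hip'] at this
      have : 1 / p₁ ≤ 0 := by linarith
      have : 0 < 1 / p₁ := by positivity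
      linarith
    linarith
  set W : ℝ≥0∞ := ∫⁻ y, ω y ∂ν with hWdef
  set w : ℝ := W.toReal with hwdef
  have hwpos : 0 < w := ENNReal.toReal_pos hW0.ne' hWT.ne
  have hWe : W = ENNReal.ofReal w := (ENNReal.ofReal_toReal hWT.ne).symm
  set Q : ℝ≥0∞ := ∫⁻ y, ω y ^ (1 - p₁') ∂ν with hQdef
  have hminv0 : m⁻¹ ≠ 0 := ENNReal.inv_ne_zero.mpr hmT
  have hminvT : m⁻¹ ≠ ⊤ := ENNReal.inv_ne_top.mpr hm0
  -- Q finite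
  have hQT : Q ≠ ⊤ := by
    intro hQtop
    have h1 : (m⁻¹ * Q) = ⊤ := by
      rw [hQtop, ENNReal.mul_top hminv0]
    have h2 : (m⁻¹ * Q) ^ (p₁ - 1) = ⊤ := by
      rw [h1]; exact ENNReal.top_rpow_of_pos (by linarith)
    have h3 : (m⁻¹ * W) ≠ 0 := by
        exact mul_ne_zero hminv0 hW0.ne'
    have : (m⁻¹ * W) * (m⁻¹ * Q) ^ (p₁ - 1) = ⊤ := by
      rw [h2, ENNReal.mul_top h3]
    rw [this] at hAp
    exact hA (top_le_iff.mp hAp)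
  -- a.e. positivity and finiteness of ω
  have haefin : ∀ᵐ y ∂ν, ω y < ⊤ := ae_lt_top hωm hWT.ne
  have haepos : ∀ᵐ y ∂ν, ω y ≠ 0 := by
    have h := ae_lt_top (hωm.pow_const (1 - p₁')) hQT
    filter_upwards [h] with y hy
    intro h0
    rw [h0, ENNReal.zero_rpow_of_neg h1p₁'] at hy
    exact absurd hy (lt_irrefl _)
  -- Hölder
  have hconj : p₁.HolderConjugate p₁' := by
    rw [Real.holderConjugate_iff]
    constructor
    · exact hp₁
    · rw [← one_div, ← one_div]; exact hpp'
  have hmeas1 : AEMeasurable (fun y => ENNReal.ofReal |f y| * ω y ^ (1 / p₁)) ν :=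
    ((hf.abs.ennreal_ofReal).mul (hωm.pow_const _)).aemeasurable
  have hmeas2 : AEMeasurable (fun y => ω y ^ (-(1 / p₁))) ν :=
    (hωm.pow_const _).aemeasurable
  have heq : ∫⁻ y, ENNReal.ofReal |f y| ∂ν =
      ∫⁻ y, (ENNReal.ofReal |f y| * ω y ^ (1 / p₁)) *
        ω y ^ (-(1 / p₁)) ∂ν := by
    refine lintegral_congr_ae ?_
    filter_upwards [haefin, haepos] with y hyT hy0
    rw [mul_assoc, ← ENNReal.rpow_add _ _ hy0 hyT.ne, add_neg_cancel,
      ENNReal.rpow_zero, mul_one]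
  have hH := ENNReal.lintegral_mul_le_Lp_mul_Lq ν hconj hmeas1 hmeas2
  simp only [Pi.mul_apply] at hH
  rw [← heq] at hH
  -- identify the two factors
  have hfac1 : ∫⁻ y, (ENNReal.ofReal |f y| * ω y ^ (1 / p₁)) ^ p₁ ∂ν =
      ∫⁻ y, ENNReal.ofReal (|f y| ^ p₁) * ω y ∂ν := by
    refine lintegral_congr fun y => ?_
    rw [ENNReal.mul_rpow_of_nonneg _ _ hp₁pos.le, ← ENNReal.rpow_mul,
      one_div_mul_cancel hp₁ne, ENNReal.rpow_one,
      ENNReal.ofReal_rpow_of_nonneg (abs_nonneg _) hp₁pos.le]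
  have hfac2 : ∫⁻ y, (ω y ^ (-(1 / p₁))) ^ p₁' ∂ν = Q := by
    refine lintegral_congr fun y => ?_
    rw [← ENNReal.rpow_mul, e1]
  rw [hfac1, hfac2] at hH
  -- bound the first factor
  have hP : (∫⁻ y, ENNReal.ofReal (|f y| ^ p₁) * ω y ∂ν) ^ (1 / p₁) ≤
      ENNReal.ofReal (M * b ^ (1 / p₁)) := by
    refine le_trans (ENNReal.rpow_le_rpow hfb (by positivity)) (le_of_eq ?_)
    rw [ENNReal.ofReal_rpow_of_nonneg (by positivity) (by positivity)]
    congr 1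
    rw [Real.mul_rpow (Real.rpow_nonneg hM _) hb.le, ← Real.rpow_mul hM,
      mul_one_div_cancel hp₁ne, Real.rpow_one]
  -- bound the second factor
  have ha0 : (m⁻¹ * W) ≠ 0 := mul_ne_zero hminv0 hW0.ne'
  have haT : (m⁻¹ * W) ≠ ⊤ := ENNReal.mul_ne_top hminvT hWT.ne
  have hstep1 : (m⁻¹ * Q) ^ (p₁ - 1) ≤ m * W⁻¹ * A := by
    have h1 : (m⁻¹ * Q) ^ (p₁ - 1) = (m⁻¹ * W)⁻¹ * ((m⁻¹ * W) * (m⁻¹ * Q) ^ (p₁ - 1)) := by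
      rw [← mul_assoc, ENNReal.inv_mul_cancel ha0 haT, one_mul]
    rw [h1]
    refine le_trans (mul_le_mul_right hAp _) (le_of_eq ?_)
    rw [ENNReal.mul_inv (Or.inl hminv0) (Or.inl hminvT), inv_inv]
  have hstep2 : (m⁻¹ * Q) ^ (1 / p₁') ≤ m ^ (1 / p₁) * (W⁻¹) ^ (1 / p₁) * A ^ (1 / p₁) := by
    have h := ENNReal.rpow_le_rpow hstep1 (le_of_lt (by positivity : (0:ℝ) < 1 / p₁))
    rw [← ENNReal.rpow_mul, e2] at h
    rwa [ENNReal.mul_rpow_of_nonneg _ _ (by positivity : (0:ℝ) ≤ 1 / p₁),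
      ENNReal.mul_rpow_of_nonneg _ _ (by positivity : (0:ℝ) ≤ 1 / p₁)] at h
  have hQbound : Q ^ (1 / p₁') ≤ A ^ (1 / p₁) * m * W ^ (-(1 / p₁)) := by
    have hQeq : Q = m * (m⁻¹ * Q) := by
      rw [← mul_assoc, ENNReal.mul_inv_cancel hm0 hmT, one_mul]
    rw [hQeq, ENNReal.mul_rpow_of_nonneg _ _ hip'pos.le]
    calc m ^ (1 / p₁') * (m⁻¹ * Q) ^ (1 / p₁')
        ≤ m ^ (1 / p₁') * (m ^ (1 / p₁) * (W⁻¹) ^ (1 / p₁) * A ^ (1 / p₁)) :=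
          mul_le_mul_right hstep2 _
      _ = A ^ (1 / p₁) * m * W ^ (-(1 / p₁)) := by
          rw [ENNReal.inv_rpow, ← ENNReal.rpow_neg, ← mul_assoc, ← mul_assoc,
            ← ENNReal.rpow_add _ _ hm0 hmT, e3, ENNReal.rpow_one]
          ring
  -- combine
  calc ∫⁻ y, ENNReal.ofReal |f y| ∂ν
      ≤ (∫⁻ y, ENNReal.ofReal (|f y| ^ p₁) * ω y ∂ν) ^ (1 / p₁) * Q ^ (1 / p₁') := hH
    _ ≤ ENNReal.ofReal (M * b ^ (1 / p₁)) * (A ^ (1 / p₁) * m * W ^ (-(1 / p₁))) :=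
        mul_le_mul' hP hQbound
    _ = A ^ (1 / p₁) * m *
          (ENNReal.ofReal (M * b ^ (1 / p₁)) * ENNReal.ofReal (w ^ (-(1 / p₁)))) := by
        rw [hWe, ENNReal.ofReal_rpow_of_pos hwpos]
        ring
    _ = A ^ (1 / p₁) * m * ENNReal.ofReal (M * (b / w) ^ (1 / p₁)) := by
        rw [← ENNReal.ofReal_mul (by positivity)]
        congr 2
        rw [Real.div_rpow hb.le hwpos.le, Real.rpow_neg hwpos.le]
        ring

end AuxLemmas

/-- Tail series estimate used in the proof of Theorem 1.8: for `ω ∈ A_{p₁}(μ)` and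
`f ∈ M^{p₁,φ}(ω)` with norm at most `M`,
`∑_{k≥1} μ(2^k B)⁻¹ ∫_{2^{k+1}B} |f| dμ ≤ C M (φ(ω(B))/ω(B))^{1/p₁}`. -/
theorem stmt13 {X : Type*} [MetricSpace X] [MeasurableSpace X] [BorelSpace X]
    (μ : Measure X) (Cμ : ℝ≥0∞) (hCμ : Cμ ≠ ⊤)
    (hdoub : ∀ (x : X) (r : ℝ), μ (ball x (2 * r)) ≤ Cμ * μ (ball x r))
    (hball : ∀ (x : X) (r : ℝ), 0 < r → μ (ball x r) ≠ 0 ∧ μ (ball x r) ≠ ⊤)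
    (p₁ p₁' : ℝ) (hp₁ : 1 < p₁) (hpp' : 1 / p₁ + 1 / p₁' = 1)
    (ω : X → ℝ≥0∞) (hωm : Measurable ω)
    (A : ℝ≥0∞) (hA : A ≠ ⊤)
    (hAp : ∀ (x : X) (r : ℝ), 0 < r →
      ((μ (ball x r))⁻¹ * ∫⁻ y in ball x r, ω y ∂μ) *
        ((μ (ball x r))⁻¹ * ∫⁻ y in ball x r, ω y ^ (1 - p₁') ∂μ) ^ (p₁ - 1) ≤ A)
    (hw : ∀ (x : X) (r : ℝ), 0 < r →
      0 < ∫⁻ y in ball x r, ω y ∂μ ∧ ∫⁻ y in ball x r, ω y ∂μ < ⊤)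
    (C₃ C₄ : ℝ) (hC₃ : 1 < C₃) (hC₄ : 1 < C₄)
    (hrd : ∀ (x : X) (r : ℝ), 0 < r →
      ENNReal.ofReal C₃ * ∫⁻ y in ball x r, ω y ∂μ ≤ ∫⁻ y in ball x (2 * r), ω y ∂μ ∧
      ∫⁻ y in ball x (2 * r), ω y ∂μ ≤ ENNReal.ofReal C₄ * ∫⁻ y in ball x r, ω y ∂μ)
    (φ : ℝ → ℝ) (hφpos : ∀ t : ℝ, 0 < t → 0 < φ t)
    (hφmono : MonotoneOn φ (Set.Ioi 0)) (hφcont : ContinuousOn φ (Set.Ioi 0))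
    (C₁ C₂ : ℝ)
    (h110 : ∀ s r : ℝ, 0 < s → s ≤ r → φ r / r ≤ C₁ * (φ s / s))
    (h111 : ∀ t : ℝ, 0 < t →
      ∫⁻ s in Set.Ioi t, ENNReal.ofReal (φ s / s ^ 2) ≤ ENNReal.ofReal (C₂ * (φ t / t)))
    (f : X → ℝ) (hf : Measurable f) (M : ℝ) (hM : 0 ≤ M)
    (hfM : ∀ (x : X) (r : ℝ), 0 < r →
      ∫⁻ y in ball x r, ENNReal.ofReal (|f y| ^ p₁) * ω y ∂μ ≤
        ENNReal.ofReal (M ^ p₁ * φ ((∫⁻ y in ball x r, ω y ∂μ).toReal))) :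
    ∃ C : ℝ, 0 < C ∧ ∀ (x : X) (r : ℝ), 0 < r →
      ∑' k : ℕ, (μ (ball x (2 ^ (k + 1) * r)))⁻¹ *
          ∫⁻ y in ball x (2 ^ (k + 2) * r), ENNReal.ofReal |f y| ∂μ ≤
        ENNReal.ofReal (C * M *
          (φ ((∫⁻ y in ball x r, ω y ∂μ).toReal) /
            (∫⁻ y in ball x r, ω y ∂μ).toReal) ^ (1 / p₁)) := by
  obtain ⟨θ, E, hθ0, hθ1, hEpos, hdec⟩ := decay_aux φ hφpos hφmono C₂ (min C₃ 2)
    (lt_min hC₃ one_lt_two) (min_le_right _ _) h111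
  have hp₁pos : 0 < p₁ := lt_trans one_pos hp₁
  set τ : ℝ := θ ^ (1 / p₁) with hτdef
  have hτ0 : 0 ≤ τ := Real.rpow_nonneg hθ0 _
  have hτ1 : τ < 1 := Real.rpow_lt_one hθ0 hθ1 (by positivity)
  have hτlt : ENNReal.ofReal τ < 1 := by
    rw [← ENNReal.ofReal_one]
    exact ENNReal.ofReal_lt_ofReal_iff_of_nonneg hτ0 |>.mpr hτ1
  set S : ℝ≥0∞ := (1 - ENNReal.ofReal τ)⁻¹ with hSdef
  have hST : S ≠ ⊤ := ENNReal.inv_ne_top.mpr (tsub_pos_of_lt hτlt).ne'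
  have hArp : A ^ (1 / p₁) ≠ ⊤ := ENNReal.rpow_ne_top_of_nonneg (by positivity) hA
  set K : ℝ≥0∞ := Cμ * A ^ (1 / p₁) * ENNReal.ofReal (E ^ (1 / p₁)) * S with hK
  have hKT : K ≠ ⊤ :=
    ENNReal.mul_ne_top
      (ENNReal.mul_ne_top (ENNReal.mul_ne_top hCμ hArp) ENNReal.ofReal_ne_top) hST
  refine ⟨K.toReal + 1, by positivity, ?_⟩
  intro x r hr
  have hrad : ∀ j : ℕ, (0:ℝ) < 2 ^ j * r := fun j => by positivity
  set w : ℕ → ℝ := fun j => (∫⁻ y in ball x (2 ^ j * r), ω y ∂μ).toReal with hwdef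
  have hwpos : ∀ j, 0 < w j := fun j =>
    ENNReal.toReal_pos (hw x _ (hrad j)).1.ne' (hw x _ (hrad j)).2.ne
  have hminle : (1:ℝ) ≤ min C₃ 2 := le_min hC₃.le one_le_two
  have hwstep : ∀ j, min C₃ 2 * w j ≤ w (j + 1) := by
    intro j
    have h2 : 2 * (2 ^ j * r) = 2 ^ (j + 1) * r := by ring
    have h1 := (hrd x (2 ^ j * r) (hrad j)).1
    rw [h2] at h1
    have h3 := ENNReal.toReal_mono (hw x _ (hrad (j + 1))).2.ne h1
    rw [ENNReal.toReal_mul, ENNReal.toReal_ofReal (by linarith : (0:ℝ) ≤ C₃)] at h3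
    calc min C₃ 2 * w j ≤ C₃ * w j :=
          mul_le_mul_of_nonneg_right (min_le_left _ _) (hwpos j).le
      _ ≤ w (j + 1) := h3
  have hwk : ∀ k : ℕ, (min C₃ 2) ^ k * w 0 ≤ w k := by
    intro k
    induction k with
    | zero => simp
    | succ n ih =>
      calc (min C₃ 2) ^ (n + 1) * w 0 = min C₃ 2 * ((min C₃ 2) ^ n * w 0) := by ring
        _ ≤ min C₃ 2 * w n := mul_le_mul_of_nonneg_left ih (by linarith)
        _ ≤ w (n + 1) := hwstep n
  have hgd : ∀ k : ℕ, φ (w (k + 2)) / w (k + 2) ≤ E * θ ^ k * (φ (w 0) / w 0) := by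
    intro k
    refine hdec (w 0) (w (k + 2)) k (hwpos 0) ?_
    calc (min C₃ 2) ^ k * w 0 ≤ (min C₃ 2) ^ (k + 2) * w 0 :=
          mul_le_mul_of_nonneg_right
            (pow_le_pow_right₀ hminle (by omega)) (hwpos 0).le
      _ ≤ w (k + 2) := hwk (k + 2)
  set G : ℝ := φ (w 0) / w 0 with hGdef
  have hGpos : 0 < G := div_pos (hφpos _ (hwpos 0)) (hwpos 0)
  have hper : ∀ k : ℕ,
      ∫⁻ y in ball x (2 ^ (k + 2) * r), ENNReal.ofReal |f y| ∂μ ≤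
        A ^ (1 / p₁) * μ (ball x (2 ^ (k + 2) * r)) *
          ENNReal.ofReal (M * (φ (w (k + 2)) / w (k + 2)) ^ (1 / p₁)) := by
    intro k
    have hb := hball x _ (hrad (k + 2))
    have hwb := hw x _ (hrad (k + 2))
    exact perball_aux (μ.restrict (ball x (2 ^ (k + 2) * r))) p₁ p₁' hp₁ hpp' ω hωm f hf
      A (μ (ball x (2 ^ (k + 2) * r))) hA hb.1 hb.2 hwb.1 hwb.2 (hAp x _ (hrad (k + 2)))
      M (φ (w (k + 2))) hM (hφpos _ (hwpos (k + 2))) (hfM x _ (hrad (k + 2)))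
  set c : ℝ≥0∞ := Cμ * A ^ (1 / p₁) * ENNReal.ofReal (E ^ (1 / p₁)) *
    ENNReal.ofReal (M * G ^ (1 / p₁)) with hcdef
  have hterm : ∀ k : ℕ,
      (μ (ball x (2 ^ (k + 1) * r)))⁻¹ *
        ∫⁻ y in ball x (2 ^ (k + 2) * r), ENNReal.ofReal |f y| ∂μ ≤
      c * ENNReal.ofReal τ ^ k := by
    intro k
    have hb1 := hball x _ (hrad (k + 1))
    have hdb : μ (ball x (2 ^ (k + 2) * r)) ≤ Cμ * μ (ball x (2 ^ (k + 1) * r)) := by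
      have h2 : 2 * (2 ^ (k + 1) * r) = 2 ^ (k + 2) * r := by ring
      have h := hdoub x (2 ^ (k + 1) * r)
      rwa [h2] at h
    have hgnn : 0 ≤ φ (w (k + 2)) / w (k + 2) :=
      (div_pos (hφpos _ (hwpos _)) (hwpos _)).le
    have hX : ENNReal.ofReal (M * (φ (w (k + 2)) / w (k + 2)) ^ (1 / p₁)) ≤
        ENNReal.ofReal τ ^ k *
          (ENNReal.ofReal (E ^ (1 / p₁)) * ENNReal.ofReal (M * G ^ (1 / p₁))) := by
      have h3 : (θ ^ k : ℝ) ^ (1 / p₁) = τ ^ k := by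
        rw [← Real.rpow_natCast θ k, ← Real.rpow_mul hθ0, mul_comm,
          Real.rpow_mul hθ0, Real.rpow_natCast]
      have h1 : (φ (w (k + 2)) / w (k + 2)) ^ (1 / p₁) ≤
          E ^ (1 / p₁) * (τ ^ k * G ^ (1 / p₁)) := by
        calc (φ (w (k + 2)) / w (k + 2)) ^ (1 / p₁)
            ≤ (E * θ ^ k * G) ^ (1 / p₁) :=
              Real.rpow_le_rpow hgnn (hgd k) (by positivity)
          _ = E ^ (1 / p₁) * (τ ^ k * G ^ (1 / p₁)) := by
              rw [Real.mul_rpow (mul_nonneg hEpos.le (pow_nonneg hθ0 k)) hGpos.le,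
                Real.mul_rpow hEpos.le (pow_nonneg hθ0 k), h3]
              ring
      calc ENNReal.ofReal (M * (φ (w (k + 2)) / w (k + 2)) ^ (1 / p₁))
          ≤ ENNReal.ofReal (τ ^ k * (E ^ (1 / p₁) * (M * G ^ (1 / p₁)))) := by
            refine ENNReal.ofReal_le_ofReal ?_
            have := mul_le_mul_of_nonneg_left h1 hM
            nlinarith [this]
        _ = ENNReal.ofReal τ ^ k *
              (ENNReal.ofReal (E ^ (1 / p₁)) * ENNReal.ofReal (M * G ^ (1 / p₁))) := by
            rw [ENNReal.ofReal_mul (pow_nonneg hτ0 k),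
              ENNReal.ofReal_mul (Real.rpow_nonneg hEpos.le _),
              ENNReal.ofReal_pow hτ0]
    calc (μ (ball x (2 ^ (k + 1) * r)))⁻¹ *
          ∫⁻ y in ball x (2 ^ (k + 2) * r), ENNReal.ofReal |f y| ∂μ
        ≤ (μ (ball x (2 ^ (k + 1) * r)))⁻¹ *
            (A ^ (1 / p₁) * μ (ball x (2 ^ (k + 2) * r)) *
              ENNReal.ofReal (M * (φ (w (k + 2)) / w (k + 2)) ^ (1 / p₁))) :=
          mul_le_mul_right (hper k) _
      _ ≤ (μ (ball x (2 ^ (k + 1) * r)))⁻¹ *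
            (A ^ (1 / p₁) * (Cμ * μ (ball x (2 ^ (k + 1) * r))) *
              ENNReal.ofReal (M * (φ (w (k + 2)) / w (k + 2)) ^ (1 / p₁))) :=
          mul_le_mul_right (mul_le_mul_left (mul_le_mul_right hdb _) _) _
      _ = ((μ (ball x (2 ^ (k + 1) * r)))⁻¹ * μ (ball x (2 ^ (k + 1) * r))) *
            (Cμ * A ^ (1 / p₁) *
              ENNReal.ofReal (M * (φ (w (k + 2)) / w (k + 2)) ^ (1 / p₁))) := by
          ring
      _ = Cμ * A ^ (1 / p₁) *
            ENNReal.ofReal (M * (φ (w (k + 2)) / w (k + 2)) ^ (1 / p₁)) := by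
          rw [ENNReal.inv_mul_cancel hb1.1 hb1.2, one_mul]
      _ ≤ Cμ * A ^ (1 / p₁) *
            (ENNReal.ofReal τ ^ k *
              (ENNReal.ofReal (E ^ (1 / p₁)) * ENNReal.ofReal (M * G ^ (1 / p₁)))) :=
          mul_le_mul_right hX _
      _ = c * ENNReal.ofReal τ ^ k := by rw [hcdef]; ring
  have hsum : (∑' k : ℕ, (μ (ball x (2 ^ (k + 1) * r)))⁻¹ *
      ∫⁻ y in ball x (2 ^ (k + 2) * r), ENNReal.ofReal |f y| ∂μ) ≤
      K * ENNReal.ofReal (M * G ^ (1 / p₁)) := by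
    calc (∑' k : ℕ, (μ (ball x (2 ^ (k + 1) * r)))⁻¹ *
        ∫⁻ y in ball x (2 ^ (k + 2) * r), ENNReal.ofReal |f y| ∂μ)
        ≤ ∑' k : ℕ, c * ENNReal.ofReal τ ^ k := ENNReal.tsum_le_tsum hterm
      _ = c * ∑' k : ℕ, ENNReal.ofReal τ ^ k := ENNReal.tsum_mul_left
      _ = c * S := by rw [ENNReal.tsum_geometric, hSdef]
      _ = K * ENNReal.ofReal (M * G ^ (1 / p₁)) := by rw [hK, hcdef]; ring
  refine le_trans hsum ?_
  have hfin : K * ENNReal.ofReal (M * G ^ (1 / p₁)) ≤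
      ENNReal.ofReal ((K.toReal + 1) * M * G ^ (1 / p₁)) := by
    calc K * ENNReal.ofReal (M * G ^ (1 / p₁))
        = ENNReal.ofReal K.toReal * ENNReal.ofReal (M * G ^ (1 / p₁)) := by
          rw [ENNReal.ofReal_toReal hKT]
      _ = ENNReal.ofReal (K.toReal * (M * G ^ (1 / p₁))) := by
          rw [← ENNReal.ofReal_mul ENNReal.toReal_nonneg]
      _ ≤ ENNReal.ofReal ((K.toReal + 1) * M * G ^ (1 / p₁)) := by
          refine ENNReal.ofReal_le_ofReal ?_
          have h1 : 0 ≤ M * G ^ (1 / p₁) := mul_nonneg hM (Real.rpow_nonneg hGpos.le _)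
          nlinarith
  refine le_trans hfin (le_of_eq ?_)
  congr 2
  rw [hGdef, hwdef]
  norm_num
end
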